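/- Let X₁, …, Xₙ be independent sub-uniform random variables and let X̄ₙ = n⁻¹ Σᵢ Xᵢ. Then for every t with 0 < t ≤ 1/2, P(1/2 − X̄ₙ ≥ t) ≤ exp(−12 n t²) · {sinh(6t)/(6t)}ⁿ. -/

import Mathlib

open MeasureTheory Set

/-- A real-valued random variable `X` on a probability space `(Ω, P)` is *sub-uniform*
if it is dominated in the convex order by the uniform distribution `U` on `[0,1]`:
`E[h(X)] ≤ E[h(U)]` for every convex `h : ℝ → ℝ` for which both expectations exist.
(The expectation `E[h(X)]` exists, with a value in `(-∞, ∞]`, precisely when the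
negative part of `h ∘ X` is integrable; in that case the inequality
`E[h(X)] ≤ E[h(U)] < ∞` forces `h ∘ X` to be integrable.  The expectation `E[h(U)]`
always exists, since a convex function on `ℝ` is continuous, hence bounded on `[0,1]`.) -/
def SubUniform {Ω : Type*} [MeasurableSpace Ω] (P : Measure Ω) (X : Ω → ℝ) : Prop :=
  ∀ h : ℝ → ℝ, ConvexOn ℝ Set.univ h →
    Integrable (fun ω => max (-(h (X ω))) 0) P →
    Integrable (fun ω => h (X ω)) P ∧
      ∫ ω, h (X ω) ∂P ≤ ∫ x in Set.Icc (0:ℝ) 1, h x ∂volume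

open ProbabilityTheory in
/-- Let `X₁, …, Xₙ` be independent sub-uniform random variables and let
`X̄ₙ = n⁻¹ ∑ᵢ Xᵢ`.  Then for every `0 < t ≤ 1/2`,
`P(1/2 − X̄ₙ ≥ t) ≤ exp(−12 n t²) · {sinh(6t)/(6t)}ⁿ`. -/
theorem subUniform_avg_chernoff' {Ω : Type*} [MeasurableSpace Ω] (P : Measure Ω)
    [IsProbabilityMeasure P] (n : ℕ) (hn : 0 < n) (X : Fin n → Ω → ℝ)
    (hmeas : ∀ i, Measurable (X i))
    (hind : iIndepFun X P)
    (hsub : ∀ i, SubUniform P (X i))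
    (t : ℝ) (ht0 : 0 < t) (ht1 : t ≤ 1/2) :
    P {ω | 1/2 - (∑ i, X i ω) / n ≥ t} ≤
      ENNReal.ofReal (Real.exp (-12 * n * t ^ 2) * (Real.sinh (6 * t) / (6 * t)) ^ n) := by
  classical
  have hn' : (0:ℝ) < n := Nat.cast_pos.mpr hn
  set c : ℝ := 12 * t with hc
  have hcpos : 0 < c := by positivity
  set Y : Fin n → Ω → ℝ := fun i ω => 1/2 - X i ω with hYdef
  have hYmeas : ∀ i, Measurable (Y i) := fun i => measurable_const.sub (hmeas i)
  have hYind : iIndepFun Y P :=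
    hind.comp (fun _ x => 1/2 - x) (fun _ => measurable_const.sub measurable_id)
  set B : ℝ := Real.sinh (6 * t) / (6 * t) with hB
  have hB0 : 0 ≤ B := by
    have := Real.sinh_nonneg_iff.mpr (by positivity : (0:ℝ) ≤ 6 * t)
    positivity
  -- the convex function
  set h : ℝ → ℝ := fun x => Real.exp (c / 2 - c * x) with hh
  have hconv : ConvexOn ℝ (Set.univ : Set ℝ) h := by
    have := convexOn_exp.comp_affineMap (AffineMap.lineMap (c / 2) (c / 2 - c))
    have heq : (Real.exp ∘ (AffineMap.lineMap (c / 2) (c / 2 - c) : ℝ →ᵃ[ℝ] ℝ)) = h := by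
      funext x
      simp [AffineMap.lineMap_apply, hh]
      ring_nf
    rw [heq] at this
    simpa using this
  -- the integral of h over [0,1]
  have hint01 : ∫ x in Set.Icc (0:ℝ) 1, h x ∂volume = B := by
    rw [MeasureTheory.integral_Icc_eq_integral_Ioc,
      ← intervalIntegral.integral_of_le (zero_le_one)]
    have hF : ∀ x ∈ Set.uIcc (0:ℝ) 1,
        HasDerivAt (fun y => -(1 / c) * Real.exp (c / 2 - c * y)) (h x) x := by
      intro x _
      have h1 : HasDerivAt (fun y : ℝ => c / 2 - c * y) (-c) x := by
        simpa using (((hasDerivAt_id x).const_mul c).const_sub (c/2))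
      have h2 := (Real.hasDerivAt_exp (c / 2 - c * x)).comp x h1
      have h3 := h2.const_mul (-(1 / c))
      have e : h x = -(1 / c) * (Real.exp (c / 2 - c * x) * -c) := by
        have hc0 := hcpos.ne'
        simp only [hh]
        field_simp
      rw [e]
      exact h3
    have hcont : IntervalIntegrable h volume 0 1 := by
      apply Continuous.intervalIntegrable
      exact Real.continuous_exp.comp (continuous_const.sub (continuous_const.mul continuous_id))
    rw [intervalIntegral.integral_eq_sub_of_hasDerivAt hF hcont]
    have hc2 : c / 2 = 6 * t := by rw [hc]; ring
    rw [hB, Real.sinh_eq, hc2]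
    have h6 : (6:ℝ) * t ≠ 0 := by positivity
    field_simp
    simp only [hc]
    ring_nf
  -- each exponential is integrable with bounded mean
  have hkey : ∀ i, Integrable (fun ω => Real.exp (c * Y i ω)) P ∧
      ∫ ω, Real.exp (c * Y i ω) ∂P ≤ B := by
    intro i
    have hfun : (fun ω => Real.exp (c * Y i ω)) = fun ω => h (X i ω) := by
      funext ω
      have : c * Y i ω = c / 2 - c * X i ω := by simp [hYdef]; ring
      rw [this]
    have hneg : Integrable (fun ω => max (-(h (X i ω))) 0) P := by
      have : (fun ω => max (-(h (X i ω))) 0) = fun _ => (0:ℝ) := by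
        funext ω
        exact max_eq_right (neg_nonpos.mpr (Real.exp_pos _).le)
      rw [this]
      exact integrable_const 0
    obtain ⟨hint, hle⟩ := hsub i h hconv hneg
    rw [hint01] at hle
    rw [hfun]
    exact ⟨hint, hle⟩
  -- integrability of sum
  have hSint : Integrable (fun ω => Real.exp (c * (∑ i, Y i) ω)) P :=
    hYind.integrable_exp_mul_sum hYmeas (fun i _ => (hkey i).1)
  -- Chernoff
  have hchern := measure_ge_le_exp_mul_mgf (μ := P) (X := ∑ i, Y i) (t := c) (n * t)
    hcpos.le hSint
  have hmgfsum : mgf (∑ i, Y i) P c = ∏ i, mgf (Y i) P c := hYind.mgf_sum hYmeas Finset.univ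
  have hprod : ∏ i, mgf (Y i) P c ≤ B ^ n := by
    calc ∏ i, mgf (Y i) P c ≤ ∏ _i : Fin n, B := by
          apply Finset.prod_le_prod
          · intro i _; exact mgf_nonneg
          · intro i _
            exact (hkey i).2
      _ = B ^ n := by simp
  -- identify the event
  have hset : {ω | 1/2 - (∑ i, X i ω) / n ≥ t} = {ω | n * t ≤ (∑ i, Y i) ω} := by
    ext ω
    have hsum : (∑ i, Y i) ω = n / 2 - ∑ i, X i ω := by
      simp [hYdef, Finset.sum_sub_distrib]
      ring
    simp only [Set.mem_setOf_eq, hsum, ge_iff_le]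
    have hdiv : (∑ i, X i ω) / n * n = ∑ i, X i ω := div_mul_cancel₀ _ hn'.ne'
    constructor
    · intro hle; nlinarith
    · intro hle; nlinarith
  have htoReal : (P {ω | 1/2 - (∑ i, X i ω) / n ≥ t}).toReal ≤
      Real.exp (-12 * n * t ^ 2) * B ^ n := by
    rw [hset]
    refine hchern.trans ?_
    rw [hmgfsum]
    have hexp : Real.exp (-c * (n * t)) = Real.exp (-12 * n * t ^ 2) := by
      congr 1; rw [hc]; ring
    rw [hexp]
    exact mul_le_mul_of_nonneg_left hprod (Real.exp_pos _).le
  calc P {ω | 1/2 - (∑ i, X i ω) / n ≥ t}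
      = ENNReal.ofReal (P {ω | 1/2 - (∑ i, X i ω) / n ≥ t}).toReal :=
        (ENNReal.ofReal_toReal (measure_ne_top _ _)).symm
    _ ≤ ENNReal.ofReal (Real.exp (-12 * n * t ^ 2) * B ^ n) :=
        ENNReal.ofReal_le_ofReal htoReal
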